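/- Let r > 0 and 0 < p < 1, and let NB(r,p) denote the negative binomial distribution on ℕ with point probabilities C(k+r−1, k)(1−p)^r p^k, whose mean is m := rp/(1−p). For every probability measure P on ℕ with finite mean E := Σ_k k·P({k}) such that E ≤ m, one has D(P‖NB(r,p)) ≥ (E − m)² / (2·(m/r)·(m + r)). (For r = 1 this gives the corresponding bound for the geometric distribution.) -/

import Mathlib

open MeasureTheory ProbabilityTheory Real

/- Kullback-Leibler divergence `D(P‖Q)`: equal to `∫ log(dP/dQ) dP` when `P ≪ Q` and the
integrand is `P`-integrable, and `+∞` otherwise. -/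
open Classical in
noncomputable def klDiv {Ω : Type*} [MeasurableSpace Ω] (P Q : Measure Ω) : EReal :=
  if P ≪ Q ∧ Integrable (fun ω => Real.log (P.rnDeriv Q ω).toReal) P
  then ((∫ ω, Real.log (P.rnDeriv Q ω).toReal ∂P : ℝ) : EReal)
  else ⊤

/-- The negative binomial distribution on ℕ with parameters r > 0 and p ∈ (0,1),
with point probabilities C(k+r-1,k) (1-p)^r p^k where C(k+r-1,k) = Γ(k+r)/(Γ(r) k!). -/
noncomputable def negBinMeasure (r p : ℝ) : Measure ℕ :=
  Measure.sum (fun k : ℕ =>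
    ENNReal.ofReal (Real.Gamma (k + r) / (Real.Gamma r * (Nat.factorial k : ℝ)) *
      (1 - p) ^ r * p ^ k) • Measure.dirac k)

section aux
open Set


lemma gamma_term_nonneg {r t : ℝ} (hr : 0 < r) (ht : 0 ≤ t) (k : ℕ) :
    0 ≤ Real.Gamma (k + r) * t ^ k / (Nat.factorial k : ℝ) := by
  have h1 : 0 < Real.Gamma (k + r) := Real.Gamma_pos_of_pos (by positivity)
  positivity

lemma negBinom_hasSum {r t : ℝ} (hr : 0 < r) (ht0 : 0 ≤ t) (ht1 : t < 1) :
    HasSum (fun k : ℕ => Real.Gamma (k + r) * t ^ k / (Nat.factorial k : ℝ))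
      (Real.Gamma r * (1 - t) ^ (-r)) := by
  set c : ℕ → ℝ := fun k => Real.Gamma (k + r) * t ^ k / (Nat.factorial k : ℝ) with hc
  have hcnn : ∀ k, 0 ≤ c k := gamma_term_nonneg hr ht0
  have h1t : 0 < 1 - t := by linarith
  have hA : 0 ≤ Real.Gamma r * (1 - t) ^ (-r) := by
    have := Real.Gamma_pos_of_pos hr; positivity
  -- the integrand family
  set g : ℕ → ℝ → ℝ := fun k x => Real.exp (-x) * x ^ ((k : ℝ) + r - 1) * t ^ k / (Nat.factorial k : ℝ) with hg
  have hgint : ∀ k, IntegrableOn (g k) (Ioi 0) := by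
    intro k
    have := Real.GammaIntegral_convergent (s := (k : ℝ) + r) (by positivity)
    simpa [hg, mul_div_assoc, IntegrableOn] using (this.mul_const (t ^ k / (Nat.factorial k : ℝ)))
  have hgnn : ∀ k, ∀ x ∈ Ioi (0:ℝ), 0 ≤ g k x := by
    intro k x hx
    have hx0 : (0:ℝ) < x := hx
    have : 0 ≤ x ^ ((k : ℝ) + r - 1) := (Real.rpow_pos_of_pos hx0 _).le
    have he : 0 ≤ Real.exp (-x) := (Real.exp_pos _).le
    positivity
  have hgval : ∀ k, ∫ x in Ioi (0:ℝ), g k x = c k := by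
    intro k
    rw [hg]
    simp only
    rw [MeasureTheory.integral_div, MeasureTheory.integral_mul_const,
      ← Real.Gamma_eq_integral (by positivity : (0:ℝ) < (k : ℝ) + r)]
  -- key identity in ENNReal
  have key : ∑' k, ENNReal.ofReal (c k)
      = ENNReal.ofReal (Real.Gamma r * (1 - t) ^ (-r)) := by
    have hmeas : ∀ k : ℕ, AEMeasurable (fun x : ℝ => ENNReal.ofReal (g k x))
        (volume.restrict (Ioi 0)) := by
      intro k
      apply Measurable.aemeasurable
      apply Measurable.ennreal_ofReal
      rw [hg]
      fun_prop
    have hI : IntegrableOn (fun x : ℝ => x ^ (r - 1) * Real.exp (-((1 - t) * x))) (Ioi 0) := by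
      have hbase := Real.GammaIntegral_convergent hr
      have hcomp : IntegrableOn
          (fun x : ℝ => Real.exp (-((1 - t) * x)) * ((1 - t) * x) ^ (r - 1)) (Ioi 0) := by
        have := (integrableOn_Ioi_comp_mul_left_iff
          (fun x : ℝ => Real.exp (-x) * x ^ (r - 1)) 0 h1t).mpr (by simpa using hbase)
        simpa using this
      have h2 := (hcomp.mul_const (((1 - t) ^ (r - 1))⁻¹))
      refine MeasureTheory.IntegrableOn.congr_fun h2 (fun x hx => ?_) measurableSet_Ioi
      have hx0 : (0:ℝ) < x := hx
      rw [Real.mul_rpow h1t.le hx0.le]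
      field_simp [(Real.rpow_pos_of_pos h1t (r-1)).ne']
    have hpt : ∀ x ∈ Ioi (0:ℝ),
        ∑' k, ENNReal.ofReal (g k x)
          = ENNReal.ofReal (x ^ (r - 1) * Real.exp (-((1 - t) * x))) := by
      intro x hx
      have hx0 : (0:ℝ) < x := hx
      have hgx : ∀ k : ℕ, g k x = Real.exp (-x) * x ^ (r - 1) * ((t * x) ^ k / (Nat.factorial k : ℝ)) := by
        intro k
        rw [hg]
        simp only
        have : ((k : ℝ) + r - 1) = (k : ℝ) + (r - 1) := by ring
        rw [this, Real.rpow_add hx0, Real.rpow_natCast, mul_pow]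
        ring
      have hsumm : Summable (fun k : ℕ => (t * x) ^ k / (Nat.factorial k : ℝ)) :=
        Real.summable_pow_div_factorial (t * x)
      have hsg : Summable (fun k => g k x) := by
        simp_rw [hgx]; exact hsumm.mul_left _
      rw [← ENNReal.ofReal_tsum_of_nonneg (fun k => hgnn k x hx) hsg]
      congr 1
      calc ∑' k, g k x = Real.exp (-x) * x ^ (r - 1) * ∑' k, (t * x) ^ k / (Nat.factorial k : ℝ) := by
            simp_rw [hgx]; exact (tsum_mul_left)
        _ = Real.exp (-x) * x ^ (r - 1) * Real.exp (t * x) := by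
            rw [Real.exp_eq_exp_ℝ, NormedSpace.exp_eq_tsum_div]
        _ = x ^ (r - 1) * Real.exp (-((1 - t) * x)) := by
            rw [mul_comm (Real.exp (-x)) (x ^ (r-1)), mul_assoc, ← Real.exp_add]
            ring_nf
    calc ∑' k, ENNReal.ofReal (c k)
        = ∑' k, ∫⁻ x in Ioi (0:ℝ), ENNReal.ofReal (g k x) := by
          refine tsum_congr fun k => ?_
          rw [← hgval k, ofReal_integral_eq_lintegral_ofReal (hgint k)
            (Filter.eventually_of_mem (ae_restrict_mem measurableSet_Ioi) (hgnn k))]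
      _ = ∫⁻ x in Ioi (0:ℝ), ∑' k, ENNReal.ofReal (g k x) := (lintegral_tsum hmeas).symm
      _ = ∫⁻ x in Ioi (0:ℝ), ENNReal.ofReal (x ^ (r - 1) * Real.exp (-((1 - t) * x))) := by
          refine setLIntegral_congr_fun measurableSet_Ioi hpt
      _ = ENNReal.ofReal (∫ x in Ioi (0:ℝ), x ^ (r - 1) * Real.exp (-((1 - t) * x))) := by
          rw [ofReal_integral_eq_lintegral_ofReal hI]
          filter_upwards [ae_restrict_mem measurableSet_Ioi] with x hx
          have hx0 : (0:ℝ) < x := hx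
          positivity
      _ = ENNReal.ofReal (Real.Gamma r * (1 - t) ^ (-r)) := by
          rw [integral_rpow_mul_exp_neg_mul_Ioi hr h1t]
          congr 1
          rw [one_div, Real.inv_rpow h1t.le, ← Real.rpow_neg h1t.le]
          ring
  have hfin : ∑' k, ENNReal.ofReal (c k) ≠ ⊤ := by rw [key]; exact ENNReal.ofReal_ne_top
  have hsumc : Summable c := by
    have := ENNReal.summable_toReal hfin
    refine this.congr fun k => ?_
    exact ENNReal.toReal_ofReal (hcnn k)
  have htsum : ∑' k, c k = Real.Gamma r * (1 - t) ^ (-r) := by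
    have := ENNReal.ofReal_tsum_of_nonneg hcnn hsumc
    rw [← this] at key
    exact (ENNReal.ofReal_eq_ofReal_iff (tsum_nonneg hcnn) hA).mp key
  exact htsum ▸ hsumc.hasSum

section analytic
variable {r p : ℝ}

lemma denom_pos (hp0 : 0 < p) (hp1 : p < 1) {x : ℝ} (hx : x ≤ 0) :
    0 < 1 - p * Real.exp x := by
  have h1 : Real.exp x ≤ 1 := Real.exp_le_one_iff.mpr hx
  nlinarith [Real.exp_pos x]

lemma mu_hasDerivAt (hr : 0 < r) (hp0 : 0 < p) (hp1 : p < 1) {x : ℝ} (hx : x ≤ 0) :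
    HasDerivAt (fun y => r * p * Real.exp y / (1 - p * Real.exp y))
      (r * p * Real.exp x / (1 - p * Real.exp x) ^ 2) x := by
  have hd := denom_pos hp0 hp1 hx
  have h1 : HasDerivAt (fun y => r * p * Real.exp y) (r * p * Real.exp x) x :=
    (Real.hasDerivAt_exp x).const_mul (r * p)
  have h2 : HasDerivAt (fun y => 1 - p * Real.exp y) (-(p * Real.exp x)) x := by
    simpa using ((Real.hasDerivAt_exp x).const_mul p).const_sub 1
  have := h1.div h2 hd.ne'
  refine this.congr_deriv ?_
  field_simp
  ring

lemma mu_lower (hr : 0 < r) (hp0 : 0 < p) (hp1 : p < 1) {lam : ℝ} (hlam : lam ≤ 0) :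
    r * p / (1 - p) + (r * p / (1 - p) ^ 2) * lam
      ≤ r * p * Real.exp lam / (1 - p * Real.exp lam) := by
  set V := r * p / (1 - p) ^ 2 with hV
  set G := fun y => r * p * Real.exp y / (1 - p * Real.exp y) - V * y with hG
  have hGd : ∀ x ∈ Iic (0:ℝ), HasDerivAt G
      (r * p * Real.exp x / (1 - p * Real.exp x) ^ 2 - V) x := by
    intro x hx
    have hlin : HasDerivAt (fun y : ℝ => V * y) V x := by
      simpa using (hasDerivAt_id x).const_mul V
    exact (mu_hasDerivAt hr hp0 hp1 hx).sub hlin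
  have hanti : AntitoneOn G (Iic (0:ℝ)) := by
    refine antitoneOn_of_deriv_nonpos (convex_Iic 0)
      (fun x hx => (hGd x hx).continuousAt.continuousWithinAt)
      (fun x hx => ((hGd x (show x ∈ Iic 0 from le_of_lt (show x < 0 by rwa [interior_Iic] at hx))).differentiableAt).differentiableWithinAt)
      (fun x hx => ?_)
    rw [interior_Iic] at hx
    rw [(hGd x (Set.mem_Iic.mpr (le_of_lt hx))).deriv]
    have hd := denom_pos hp0 hp1 (le_of_lt hx)
    have hdp : (0:ℝ) < 1 - p := by linarith
    have hex : Real.exp x < 1 := Real.exp_lt_one_iff.mpr hx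
    have hex0 : 0 < Real.exp x := Real.exp_pos x
    have : r * p * Real.exp x / (1 - p * Real.exp x) ^ 2 ≤ V := by
      rw [hV, div_le_div_iff₀ (by positivity) (by positivity)]
      have h1 : 0 ≤ 1 - Real.exp x := by linarith
      have h2 : 0 ≤ 1 - p * p * Real.exp x := by nlinarith
      nlinarith [mul_nonneg (mul_nonneg (mul_nonneg hr.le hp0.le) h1) h2]
    linarith
  have := hanti (show lam ∈ Iic (0:ℝ) from hlam) (Set.mem_Iic.mpr (le_refl 0)) hlam
  have hG0 : G 0 = r * p / (1 - p) := by simp [hG]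
  rw [hG0] at this
  simp only [hG] at this
  linarith

lemma psi_bound (hr : 0 < r) (hp0 : 0 < p) (hp1 : p < 1) {lam : ℝ} (hlam : lam ≤ 0) :
    r * Real.log (1 - p) - r * Real.log (1 - p * Real.exp lam)
      ≤ (r * p / (1 - p)) * lam + (r * p / (1 - p) ^ 2) * lam ^ 2 / 2 := by
  set m := r * p / (1 - p) with hm
  set V := r * p / (1 - p) ^ 2 with hV
  set F := fun y => m * y + V * y ^ 2 / 2 - r * Real.log (1 - p)
      + r * Real.log (1 - p * Real.exp y) with hF
  have hFd : ∀ x ∈ Iic (0:ℝ), HasDerivAt F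
      (m + V * x - r * p * Real.exp x / (1 - p * Real.exp x)) x := by
    intro x hx
    have hd := denom_pos hp0 hp1 hx
    have h2 : HasDerivAt (fun y => 1 - p * Real.exp y) (-(p * Real.exp x)) x := by
      simpa using ((Real.hasDerivAt_exp x).const_mul p).const_sub 1
    have hlog : HasDerivAt (fun y => Real.log (1 - p * Real.exp y))
        (-(p * Real.exp x) / (1 - p * Real.exp x)) x := h2.log hd.ne'
    have h1 : HasDerivAt (fun y => m * y + V * y ^ 2 / 2 - r * Real.log (1 - p))
        (m + V * x) x := by
      have ha : HasDerivAt (fun y : ℝ => m * y) m x := by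
        simpa using (hasDerivAt_id x).const_mul m
      have hb : HasDerivAt (fun y : ℝ => V * y ^ 2 / 2) (V * x) x := by
        have := ((hasDerivAt_pow 2 x).const_mul V).div_const 2
        refine this.congr_deriv ?_
        ring
      simpa using (ha.add hb).sub_const (r * Real.log (1 - p))
    have := h1.add (hlog.const_mul r)
    refine this.congr_deriv ?_
    field_simp
    ring
  have hanti : AntitoneOn F (Iic (0:ℝ)) := by
    refine antitoneOn_of_deriv_nonpos (convex_Iic 0)
      (fun x hx => (hFd x hx).continuousAt.continuousWithinAt)
      (fun x hx => ((hFd x (show x ∈ Iic 0 from le_of_lt (show x < 0 by rwa [interior_Iic] at hx))).differentiableAt).differentiableWithinAt)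
      (fun x hx => ?_)
    rw [interior_Iic] at hx
    rw [(hFd x (Set.mem_Iic.mpr (le_of_lt hx))).deriv]
    have := mu_lower hr hp0 hp1 (le_of_lt hx)
    rw [← hm, ← hV] at this
    linarith
  have h := hanti (show lam ∈ Iic (0:ℝ) from hlam) (Set.mem_Iic.mpr (le_refl 0)) hlam
  have hF0 : F 0 = 0 := by simp [hF]
  rw [hF0] at h
  simp only [hF] at h
  linarith

end analytic

lemma negBin_apply (r p : ℝ) (k : ℕ) :
    negBinMeasure r p {k} = ENNReal.ofReal (Real.Gamma (k + r) /
      (Real.Gamma r * (Nat.factorial k : ℝ)) * (1 - p) ^ r * p ^ k) := by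
  rw [negBinMeasure, Measure.sum_apply _ (measurableSet_singleton k)]
  rw [tsum_eq_single k ?_]
  · simp
  · intro j hj
    simp [Measure.dirac_apply, Set.indicator_apply, hj]

lemma negBin_univ (r p : ℝ) :
    negBinMeasure r p Set.univ = ∑' k : ℕ, ENNReal.ofReal (Real.Gamma (k + r) /
      (Real.Gamma r * (Nat.factorial k : ℝ)) * (1 - p) ^ r * p ^ k) := by
  rw [negBinMeasure, Measure.sum_apply _ MeasurableSet.univ]
  simp

lemma tilt_hasSum {r p : ℝ} (hr : 0 < r) (hp0 : 0 < p) (hp1 : p < 1) {lam : ℝ}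
    (hlam : lam ≤ 0) :
    HasSum (fun k : ℕ => Real.Gamma (k + r) / (Real.Gamma r * (Nat.factorial k : ℝ)) *
        (1 - p) ^ r * p ^ k * Real.exp (lam * k))
      ((1 - p) ^ r * (1 - p * Real.exp lam) ^ (-r)) := by
  have hexp : 0 < Real.exp lam := Real.exp_pos lam
  have hexp1 : Real.exp lam ≤ 1 := Real.exp_le_one_iff.mpr hlam
  have ht0 : 0 ≤ p * Real.exp lam := by positivity
  have ht1 : p * Real.exp lam < 1 := by nlinarith
  have hG : 0 < Real.Gamma r := Real.Gamma_pos_of_pos hr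
  have h := (negBinom_hasSum hr ht0 ht1).mul_right ((1 - p) ^ r / Real.Gamma r)
  have heq : (fun k : ℕ => Real.Gamma (k + r) * (p * Real.exp lam) ^ k /
      (Nat.factorial k : ℝ) * ((1 - p) ^ r / Real.Gamma r))
      = fun k : ℕ => Real.Gamma (k + r) / (Real.Gamma r * (Nat.factorial k : ℝ)) *
        (1 - p) ^ r * p ^ k * Real.exp (lam * k) := by
    funext k
    have hfk : (0:ℝ) < (Nat.factorial k : ℝ) := by positivity
    have hpow : (p * Real.exp lam) ^ k = p ^ k * Real.exp (lam * k) := by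
      rw [mul_pow, ← Real.exp_nat_mul, mul_comm (k : ℝ) lam]
    rw [hpow]
    field_simp
  rw [heq] at h
  rw [show (1 - p) ^ r * (1 - p * Real.exp lam) ^ (-r) = Real.Gamma r * (1 - p * Real.exp lam) ^ (-r) * ((1 - p) ^ r / Real.Gamma r) by field_simp]
  exact h

end aux

theorem stmt_8
    (r p : ℝ) (hr : 0 < r) (hp0 : 0 < p) (hp1 : p < 1)
    (P : Measure ℕ) [IsProbabilityMeasure P]
    (hsum : Summable (fun k : ℕ => (k : ℝ) * (P {k}).toReal))
    (hE : ∑' k : ℕ, (k : ℝ) * (P {k}).toReal ≤ r * p / (1 - p)) :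
    ((((∑' k : ℕ, (k : ℝ) * (P {k}).toReal) - r * p / (1 - p)) ^ 2 /
        (2 * (r * p / (1 - p) / r) * (r * p / (1 - p) + r)) : ℝ) : EReal)
      ≤ klDiv P (negBinMeasure r p) := by
  have h1p : (0:ℝ) < 1 - p := by linarith
  set Q := negBinMeasure r p with hQdef
  by_cases hcond : P ≪ Q ∧ Integrable (fun ω => Real.log (P.rnDeriv Q ω).toReal) P
  case neg => rw [klDiv, if_neg hcond]; exact le_top
  rw [klDiv, if_pos hcond]
  rw [EReal.coe_le_coe_iff]
  set qv : ℕ → ℝ := fun k => Real.Gamma (k + r) / (Real.Gamma r * (Nat.factorial k : ℝ)) *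
      (1 - p) ^ r * p ^ k with hqv
  have hqvpos : ∀ k, 0 < qv k := by
    intro k
    have h1 : 0 < Real.Gamma ((k:ℝ) + r) := Real.Gamma_pos_of_pos (by positivity)
    have h2 : 0 < Real.Gamma r := Real.Gamma_pos_of_pos hr
    have h3 : (0:ℝ) < (Nat.factorial k : ℝ) := by positivity
    rw [hqv]
    positivity
  have hQk : ∀ k, Q {k} = ENNReal.ofReal (qv k) := fun k => negBin_apply r p k
  have hQsum0 := tilt_hasSum hr hp0 hp1 (le_refl 0)
  have hqvsummable : Summable qv := by
    have := hQsum0.summable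
    refine this.congr fun k => ?_
    simp [hqv]
  haveI hQfin : IsFiniteMeasure Q := by
    constructor
    rw [hQdef, negBin_univ r p]
    rw [← ENNReal.ofReal_tsum_of_nonneg (fun k => (hqvpos k).le) hqvsummable]
    exact ENNReal.ofReal_lt_top
  -- rn deriv identification
  have hrnd : ∀ k : ℕ, P.rnDeriv Q k = P {k} / Q {k} := by
    have hmf : Measurable (fun k : ℕ => P {k} / Q {k}) := measurable_of_countable _
    have hwd : Q.withDensity (fun k => P {k} / Q {k}) = P := by
      refine MeasureTheory.Measure.ext_iff_singleton.mpr fun k => ?_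
      rw [withDensity_apply _ (measurableSet_singleton k), lintegral_singleton' hmf k]
      rw [ENNReal.div_mul_cancel]
      · rw [hQk k]; exact (ENNReal.ofReal_pos.mpr (hqvpos k)).ne'
      · rw [hQk k]; exact ENNReal.ofReal_ne_top
    have hae := Measure.rnDeriv_withDensity Q hmf
    rw [hwd] at hae
    intro k
    by_contra hne
    have h0 : Q {x : ℕ | ¬ P.rnDeriv Q x = P {x} / Q {x}} = 0 := hae
    have h1 : Q {k} = 0 := by
      refine measure_mono_null ?_ h0
      intro x hx
      simp only [Set.mem_singleton_iff] at hx
      subst hx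
      exact hne
    rw [hQk k] at h1
    exact absurd h1 (ENNReal.ofReal_pos.mpr (hqvpos k)).ne'
  set pv : ℕ → ℝ := fun k => (P {k}).toReal with hpv
  have hpvnn : ∀ k, 0 ≤ pv k := fun k => ENNReal.toReal_nonneg
  have hf : ∀ k : ℕ, Real.log ((P.rnDeriv Q k).toReal) = Real.log (pv k / qv k) := by
    intro k
    rw [hrnd k, ENNReal.toReal_div, hQk k, ENNReal.toReal_ofReal (hqvpos k).le]
  have hint : ∫ ω, Real.log (P.rnDeriv Q ω).toReal ∂P
      = ∑' k, pv k * Real.log (pv k / qv k) := by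
    rw [integral_countable' hcond.2]
    exact tsum_congr fun k => by rw [hf k, smul_eq_mul]; rfl
  rw [hint]
  -- basic sums about pv
  have hPtsum : ∑' k, P {k} = 1 := by
    have hs := Measure.sum_smul_dirac P
    calc ∑' k, P {k} = Measure.sum (fun k => P {k} • Measure.dirac k) Set.univ := by
          rw [Measure.sum_apply _ MeasurableSet.univ]; simp
      _ = P Set.univ := by rw [hs]
      _ = 1 := measure_univ
  have hpsummable : Summable pv :=
    ENNReal.summable_toReal (by rw [hPtsum]; exact ENNReal.one_ne_top)
  have hpv1 : ∑' k, pv k = 1 := by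
    rw [hpv]
    rw [← ENNReal.tsum_toReal_eq (fun k => measure_ne_top P _), hPtsum, ENNReal.toReal_one]
  -- summability of the log sum
  have hlogsum : Summable (fun k => pv k * Real.log (pv k / qv k)) := by
    have h2 : HasFiniteIntegral (fun ω => Real.log (P.rnDeriv Q ω).toReal) P :=
      hcond.2.hasFiniteIntegral
    rw [HasFiniteIntegral, lintegral_countable'] at h2
    have h3 := ENNReal.summable_toReal h2.ne
    have h4 : Summable (fun k => ‖Real.log (pv k / qv k)‖ * pv k) := by
      refine h3.congr fun k => ?_
      rw [ENNReal.toReal_mul, hf k]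
      simp [hpv]
    refine Summable.of_norm ?_
    refine h4.congr fun k => ?_
    rw [norm_mul, mul_comm]
    congr 1
    simp [Real.norm_eq_abs, abs_of_nonneg (hpvnn k)]
  -- set up the tilting
  set E := ∑' k : ℕ, (k : ℝ) * (P {k}).toReal with hEdef
  set m := r * p / (1 - p) with hm
  set V := r * p / (1 - p) ^ 2 with hV
  have hVpos : 0 < V := by rw [hV]; positivity
  set lam := (E - m) / V with hlamdef
  have hlam0 : lam ≤ 0 :=
    div_nonpos_of_nonpos_of_nonneg (by linarith [hE]) hVpos.le
  have hden : 0 < 1 - p * Real.exp lam := denom_pos hp0 hp1 hlam0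
  set Mv := ((1 - p) : ℝ) ^ r * (1 - p * Real.exp lam) ^ (-r) with hMv
  have hMsum : HasSum (fun k => qv k * Real.exp (lam * k)) Mv := tilt_hasSum hr hp0 hp1 hlam0
  have hMpos : 0 < Mv := by
    rw [hMv]
    exact mul_pos (Real.rpow_pos_of_pos h1p r) (Real.rpow_pos_of_pos hden (-r))
  set q' : ℕ → ℝ := fun k => qv k * Real.exp (lam * k) / Mv with hq'
  have hq'pos : ∀ k, 0 < q' k := by
    intro k
    rw [hq']
    exact div_pos (mul_pos (hqvpos k) (Real.exp_pos _)) hMpos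
  have hq'sum : HasSum q' 1 := by
    have := hMsum.div_const Mv
    rwa [div_self hMpos.ne'] at this
  -- termwise identity
  have hiden : ∀ k : ℕ, pv k * Real.log (pv k / q' k)
      = pv k * Real.log (pv k / qv k) - lam * ((k : ℝ) * pv k) + Real.log Mv * pv k := by
    intro k
    rcases eq_or_lt_of_le (hpvnn k) with h | h
    · rw [← h]; ring
    · have hlq : Real.log (q' k) = Real.log (qv k) + lam * k - Real.log Mv := by
        rw [hq']
        rw [Real.log_div (mul_pos (hqvpos k) (Real.exp_pos _)).ne' hMpos.ne',
          Real.log_mul (hqvpos k).ne' (Real.exp_pos _).ne', Real.log_exp]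
      rw [Real.log_div h.ne' (hq'pos k).ne', Real.log_div h.ne' (hqvpos k).ne', hlq]
      ring
  -- summabilities of the pieces
  have hBsum : Summable (fun k : ℕ => lam * ((k : ℝ) * pv k)) := hsum.mul_left lam
  have hCsum : Summable (fun k : ℕ => Real.log Mv * pv k) := hpsummable.mul_left _
  have hq'summable2 : Summable (fun k => pv k * Real.log (pv k / q' k)) := by
    have : Summable (fun k => pv k * Real.log (pv k / qv k) - lam * ((k : ℝ) * pv k)
        + Real.log Mv * pv k) := (hlogsum.sub hBsum).add hCsum
    refine this.congr fun k => (hiden k).symm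
  -- Gibbs inequality
  have hgibbs : (0:ℝ) ≤ ∑' k, pv k * Real.log (pv k / q' k) := by
    have hterm : ∀ k : ℕ, pv k - q' k ≤ pv k * Real.log (pv k / q' k) := by
      intro k
      rcases eq_or_lt_of_le (hpvnn k) with h | h
      · rw [← h]; simpa using (hq'pos k).le
      · have hkey := Real.log_le_sub_one_of_pos (div_pos (hq'pos k) h)
        have hlog2 : Real.log (q' k / pv k) = - Real.log (pv k / q' k) := by
          rw [Real.log_div (hq'pos k).ne' h.ne', Real.log_div h.ne' (hq'pos k).ne']
          ring
        rw [hlog2] at hkey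
        have h5 := mul_le_mul_of_nonneg_left hkey (hpvnn k)
        have h6 : pv k * (q' k / pv k) = q' k := by field_simp
        nlinarith [h5, h6]
    have hsumL : Summable (fun k => pv k - q' k) := hpsummable.sub hq'sum.summable
    calc (0:ℝ) = ∑' k, (pv k - q' k) := by
          rw [Summable.tsum_sub hpsummable hq'sum.summable, hpv1, hq'sum.tsum_eq, sub_self]
      _ ≤ _ := Summable.tsum_le_tsum hterm hsumL hq'summable2
  -- split the sum
  have hsplit : ∑' k, pv k * Real.log (pv k / q' k)
      = (∑' k, pv k * Real.log (pv k / qv k)) - lam * E + Real.log Mv := by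
    calc ∑' k, pv k * Real.log (pv k / q' k)
        = ∑' k, (pv k * Real.log (pv k / qv k) - lam * ((k : ℝ) * pv k)
            + Real.log Mv * pv k) := tsum_congr hiden
      _ = (∑' k, (pv k * Real.log (pv k / qv k) - lam * ((k : ℝ) * pv k)))
            + ∑' k, Real.log Mv * pv k := Summable.tsum_add (hlogsum.sub hBsum) hCsum
      _ = (∑' k, pv k * Real.log (pv k / qv k)) - (∑' k : ℕ, lam * ((k : ℝ) * pv k))
            + ∑' k : ℕ, Real.log Mv * pv k := by rw [Summable.tsum_sub hlogsum hBsum]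
      _ = (∑' k, pv k * Real.log (pv k / qv k)) - lam * E + Real.log Mv := by
          rw [tsum_mul_left, tsum_mul_left, hpv1, mul_one]
  have hT : lam * E - Real.log Mv ≤ ∑' k, pv k * Real.log (pv k / qv k) := by
    linarith [hgibbs, hsplit.symm.le, hsplit.le]
  -- compute log Mv and conclude
  have hlogM : Real.log Mv = r * Real.log (1 - p) - r * Real.log (1 - p * Real.exp lam) := by
    rw [hMv, Real.log_mul (Real.rpow_pos_of_pos h1p r).ne' (Real.rpow_pos_of_pos hden (-r)).ne',
      Real.log_rpow h1p, Real.log_rpow hden]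
    ring
  have hpsi := psi_bound hr hp0 hp1 hlam0
  rw [← hm, ← hV] at hpsi
  have hfinal : (E - m) ^ 2 / (2 * (m / r) * (m + r)) ≤ lam * E - Real.log Mv := by
    rw [hlogM]
    have h2 : lam * E - (m * lam + V * lam ^ 2 / 2)
        = (E - m) ^ 2 / (2 * (m / r) * (m + r)) := by
      rw [hlamdef, hV, hm]
      field_simp
      ring
    linarith [hpsi]
  exact le_trans hfinal hT
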